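/- Let G be the graph formed by two 6-cycles (v₁,…,v₆) and (v₆,…,v₁₁) sharing only the vertex v₆ (edge-disjoint). If w : V(G) → ℝ makes G w-well-dominated, then w(v₃) = w(v₆) = w(v₉) = 0, w(v₁) = w(v₂) = −w(v₄) = −w(v₅), and w(v₇) = w(v₈) = −w(v₁₀) = −w(v₁₁). -/
import Mathlib


/-- `S` is a dominating set of `G`: every vertex is in `S` or adjacent to a vertex of `S`. -/
def Dominates {V : Type*} (G : SimpleGraph V) (S : Finset V) : Prop :=
  ∀ v : V, v ∈ S ∨ ∃ u ∈ S, G.Adj u v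

/-- `S` is a minimal dominating set of `G`. -/
def IsMinDomSet {V : Type*} (G : SimpleGraph V) (S : Finset V) : Prop :=
  Dominates G S ∧ ∀ T : Finset V, T ⊂ S → ¬ Dominates G T

/-- `S` is an independent set of `G`. -/
def IsIndepSet {V : Type*} (G : SimpleGraph V) (S : Finset V) : Prop :=
  ∀ u ∈ S, ∀ v ∈ S, ¬ G.Adj u v

/-- `S` is a maximal independent set of `G`. -/
def IsMaxIndepSet {V : Type*} (G : SimpleGraph V) (S : Finset V) : Prop :=
  IsIndepSet G S ∧ ∀ T : Finset V, IsIndepSet G T → S ⊆ T → S = T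

/-- Two 6-cycles `v₁…v₆` and `v₆…v₁₁` sharing only the vertex `v₆`.
Vertex `i : Fin 11` stands for `v_{i+1}`. -/
def twoHexagons : SimpleGraph (Fin 11) :=
  SimpleGraph.fromRel (fun a b =>
    (a = 0 ∧ b = 1) ∨ (a = 1 ∧ b = 2) ∨ (a = 2 ∧ b = 3) ∨ (a = 3 ∧ b = 4) ∨
    (a = 4 ∧ b = 5) ∨ (a = 5 ∧ b = 0) ∨ (a = 5 ∧ b = 6) ∨ (a = 6 ∧ b = 7) ∨
    (a = 7 ∧ b = 8) ∨ (a = 8 ∧ b = 9) ∨ (a = 9 ∧ b = 10) ∨ (a = 10 ∧ b = 5))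

instance : DecidableRel twoHexagons.Adj := fun a b =>
  decidable_of_iff _ (SimpleGraph.fromRel_adj _ a b).symm

instance dDomTH (S : Finset (Fin 11)) : Decidable (Dominates twoHexagons S) := by
  unfold Dominates; infer_instance

lemma dom_mono {V : Type*} {G : SimpleGraph V} {S T : Finset V} (h : S ⊆ T)
    (hd : Dominates G S) : Dominates G T := by
  intro v
  rcases hd v with hv | ⟨u, hu, ha⟩
  · exact Or.inl (h hv)
  · exact Or.inr ⟨u, h hu, ha⟩

lemma minDom_of {S : Finset (Fin 11)} (h1 : Dominates twoHexagons S)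
    (h2 : ∀ v ∈ S, ¬ Dominates twoHexagons (S.erase v)) :
    IsMinDomSet twoHexagons S := by
  refine ⟨h1, fun T hT hd => ?_⟩
  obtain ⟨v, hvS, hvT⟩ := Finset.exists_of_ssubset hT
  exact h2 v hvS (dom_mono (fun x hx => Finset.mem_erase.2
    ⟨fun he => hvT (he ▸ hx), hT.1 hx⟩) hd)

/-- If the two-hexagon graph is `w`-well-dominated, then `w(v₃)=w(v₆)=w(v₉)=0`,
`w(v₁)=w(v₂)=-w(v₄)=-w(v₅)` and `w(v₇)=w(v₈)=-w(v₁₀)=-w(v₁₁)`. -/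
theorem twoHexagons_wwd_weights (w : Fin 11 → ℝ)
    (hwwd : ∀ S T : Finset (Fin 11), IsMinDomSet twoHexagons S → IsMinDomSet twoHexagons T →
      (∑ v ∈ S, w v) = (∑ v ∈ T, w v)) :
    w 2 = 0 ∧ w 5 = 0 ∧ w 8 = 0 ∧
    w 0 = w 1 ∧ w 1 = -(w 3) ∧ w 3 = w 4 ∧
    w 6 = w 7 ∧ w 7 = -(w 9) ∧ w 9 = w 10 := by
  have hA : IsMinDomSet twoHexagons {2,5,8} := minDom_of (by decide) (by decide)
  have hB : IsMinDomSet twoHexagons {0,3,5,8} := minDom_of (by decide) (by decide)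
  have hC : IsMinDomSet twoHexagons {1,3,5,8} := minDom_of (by decide) (by decide)
  have hD : IsMinDomSet twoHexagons {1,4,5,8} := minDom_of (by decide) (by decide)
  have hE : IsMinDomSet twoHexagons {0,3,6,9} := minDom_of (by decide) (by decide)
  have hF : IsMinDomSet twoHexagons {0,3,7,9} := minDom_of (by decide) (by decide)
  have hG : IsMinDomSet twoHexagons {0,3,7,10} := minDom_of (by decide) (by decide)
  have hI : IsMinDomSet twoHexagons {1,3,6,9} := minDom_of (by decide) (by decide)
  have hJ : IsMinDomSet twoHexagons {1,3,5,7,9} := minDom_of (by decide) (by decide)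
  have hK : IsMinDomSet twoHexagons {0,3,6,8,10} := minDom_of (by decide) (by decide)
  have hL : IsMinDomSet twoHexagons {0,2,4,6,9} := minDom_of (by decide) (by decide)
  have h1 := hwwd _ _ hB hC
  have h2 := hwwd _ _ hC hD
  have h3 := hwwd _ _ hE hF
  have h4 := hwwd _ _ hF hG
  have h5 := hwwd _ _ hA hB
  have h6 := hwwd _ _ hL hE
  have h7 := hwwd _ _ hJ hC
  have h8 := hwwd _ _ hK hE
  have h9 := hwwd _ _ hC hI
  simp [Finset.sum_insert, Finset.mem_insert] at h1 h2 h3 h4 h5 h6 h7 h8 h9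
  refine ⟨by linarith, by linarith, by linarith, by linarith, by linarith,
    by linarith, by linarith, by linarith, by linarith⟩
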